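/- Suppose τ₀ - λ₀ is nonoscillatory, i.e., some (hence every) nontrivial real solution u₀ of (τ₀ - λ₀)u = 0 has finitely many zeros in (a,b). Then τ₁ - λ₁ is relatively nonoscillatory with respect to τ₀ - λ₀ (i.e., liminf and limsup as x → b of N(u₀,u₁)(x) are both finite) if and only if τ₁ - λ₁ is nonoscillatory. -/

import Mathlib

open Real Set Filter

private lemma aux_slope_pos {f : ℝ → ℝ} {x d : ℝ} (hf : HasDerivAt f d x) (hd : 0 < d) :
    (∀ᶠ t in nhdsWithin x (Iio x), f t < f x) ∧ (∀ᶠ t in nhdsWithin x (Ioi x), f x < f t) := by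
  have hs : Tendsto (slope f x) (nhdsWithin x {x}ᶜ) (nhds d) := hasDerivAt_iff_tendsto_slope.mp hf
  have h1 : ∀ᶠ t in nhdsWithin x {x}ᶜ, 0 < slope f x t := hs.eventually (eventually_gt_nhds hd)
  have hlt : Iio x ⊆ ({x} : Set ℝ)ᶜ := fun t ht => ne_of_lt ht
  have hgt : Ioi x ⊆ ({x} : Set ℝ)ᶜ := fun t ht => ne_of_gt ht
  constructor
  · filter_upwards [nhdsWithin_mono x hlt h1, self_mem_nhdsWithin] with t ht htx
    rw [slope_def_field] at ht
    rcases div_pos_iff.mp ht with ⟨h2, h3⟩ | ⟨h2, h3⟩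
    · exfalso; simp only [mem_Iio] at htx; linarith
    · linarith
  · filter_upwards [nhdsWithin_mono x hgt h1, self_mem_nhdsWithin] with t ht htx
    rw [slope_def_field] at ht
    rcases div_pos_iff.mp ht with ⟨h2, h3⟩ | ⟨h2, h3⟩
    · linarith
    · exfalso; simp only [mem_Ioi] at htx; linarith

private lemma aux_slope_ne {f : ℝ → ℝ} {x d : ℝ} (hf : HasDerivAt f d x) (hd : d ≠ 0) :
    ∀ᶠ t in nhdsWithin x {x}ᶜ, f t ≠ f x := by
  have hs : Tendsto (slope f x) (nhdsWithin x {x}ᶜ) (nhds d) := hasDerivAt_iff_tendsto_slope.mp hf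
  have h1 : ∀ᶠ t in nhdsWithin x {x}ᶜ, slope f x t ≠ 0 := hs.eventually (eventually_ne_nhds hd)
  filter_upwards [h1] with t ht he
  exact ht (by rw [slope_def_field, he, sub_self, zero_div])

private lemma aux_interval (θ : ℝ → ℝ) {c b : ℝ} (hcb : c < b) (hcont : ContinuousOn θ (Ioo c b))
    (hne : ∀ t ∈ Ioo c b, Real.sin (θ t) ≠ 0) :
    ∃ k : ℤ, ∀ t ∈ Ioo c b, (k : ℝ) * π < θ t ∧ θ t < ((k : ℝ) + 1) * π := by
  have hπ : (0:ℝ) < π := Real.pi_pos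
  set t₀ : ℝ := (c + b) / 2 with ht₀def
  have ht₀ : t₀ ∈ Ioo c b := ⟨by simp only [ht₀def]; linarith, by simp only [ht₀def]; linarith⟩
  set k : ℤ := ⌊θ t₀ / π⌋ with hkdef
  have hk1 : (k : ℝ) ≤ θ t₀ / π := Int.floor_le _
  have hk2 : θ t₀ / π < (k : ℝ) + 1 := Int.lt_floor_add_one _
  have hkne : (k : ℝ) ≠ θ t₀ / π := by
    intro h
    apply hne t₀ ht₀
    have : θ t₀ = (k : ℝ) * π := by field_simp at h ⊢; linarith [h]
    rw [this]; exact Real.sin_int_mul_pi k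
  have hk1' : (k : ℝ) * π < θ t₀ := by
    have : (k : ℝ) < θ t₀ / π := lt_of_le_of_ne hk1 hkne
    calc (k:ℝ) * π < (θ t₀ / π) * π := by exact mul_lt_mul_of_pos_right this hπ
    _ = θ t₀ := by field_simp
  have hk2' : θ t₀ < ((k : ℝ) + 1) * π := by
    calc θ t₀ = (θ t₀ / π) * π := by field_simp
    _ < ((k:ℝ) + 1) * π := mul_lt_mul_of_pos_right hk2 hπ
  refine ⟨k, fun t ht => ?_⟩
  have hsub : uIcc t₀ t ⊆ Ioo c b := (Set.ordConnected_Ioo).uIcc_subset ht₀ ht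
  have hivt := intermediate_value_uIcc (hcont.mono hsub)
  constructor
  · by_contra h
    push_neg at h
    have hmem : (k:ℝ) * π ∈ uIcc (θ t₀) (θ t) := by
      rw [Set.mem_uIcc]; right; exact ⟨h, hk1'.le⟩
    obtain ⟨s, hs, hθs⟩ := hivt hmem
    exact hne s (hsub hs) (by rw [hθs]; exact Real.sin_int_mul_pi k)
  · by_contra h
    push_neg at h
    have hmem : ((k:ℝ) + 1) * π ∈ uIcc (θ t₀) (θ t) := by
      rw [Set.mem_uIcc]; left; exact ⟨hk2'.le, h⟩
    obtain ⟨s, hs, hθs⟩ := hivt hmem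
    apply hne s (hsub hs)
    rw [hθs]
    have : ((k:ℝ) + 1) * π = ((k + 1 : ℤ) : ℝ) * π := by push_cast; ring
    rw [this]; exact Real.sin_int_mul_pi (k+1)

private lemma aux_tail {a b : ℝ} (hab : a < b) {u : ℝ → ℝ} (h : {x ∈ Ioo a b | u x = 0}.Finite) :
    ∃ c, a ≤ c ∧ c < b ∧ ∀ t ∈ Ioo c b, u t ≠ 0 := by
  by_cases hne : {x ∈ Ioo a b | u x = 0}.Nonempty
  · obtain ⟨c, hc, hmax⟩ := Set.Finite.exists_maximalFor id _ h hne
    refine ⟨c, hc.1.1.le, hc.1.2, fun t ht h0 => ?_⟩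
    have htS : t ∈ {x ∈ Ioo a b | u x = 0} := ⟨⟨lt_trans hc.1.1 ht.1, ht.2⟩, h0⟩
    have := hmax htS (le_of_lt ht.1)
    simp only [id] at this
    exact absurd this (not_le.mpr ht.1)
  · exact ⟨a, le_refl a, hab, fun t ht h0 => hne ⟨t, ht, h0⟩⟩

private lemma aux_lift {a b lam₁ : ℝ} {p₁ q₁ r₁ u₁ pu₁ ρ₁ θ₁ : ℝ → ℝ}
    (hp₁ : ∀ x ∈ Ico a b, 0 < p₁ x)
    (hu₁ : ∀ x ∈ Ico a b, HasDerivAt u₁ (pu₁ x / p₁ x) x)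
    (hpu₁ : ∀ x ∈ Ico a b, HasDerivAt pu₁ ((q₁ x - lam₁ * r₁ x) * u₁ x) x)
    (hρ₁ : ∀ x ∈ Ico a b, 0 < ρ₁ x)
    (hs₁ : ∀ x ∈ Ico a b, u₁ x = ρ₁ x * Real.sin (θ₁ x))
    (hc₁ : ∀ x ∈ Ico a b, pu₁ x = ρ₁ x * Real.cos (θ₁ x))
    (hθ₁ : ContinuousOn θ₁ (Ico a b))
    {z : ℝ} (hz : z ∈ Ioo a b) (hz0 : u₁ z = 0) :
    HasDerivAt θ₁ (1 / p₁ z) z := by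
  have hπ : (0:ℝ) < π := Real.pi_pos
  have hzI : z ∈ Ico a b := ⟨hz.1.le, hz.2⟩
  have hρ := hρ₁ z hzI
  have hsin : Real.sin (θ₁ z) = 0 := by
    have h := hs₁ z hzI
    rw [hz0] at h
    exact (mul_eq_zero.mp h.symm).resolve_left hρ.ne'
  obtain ⟨n, hn⟩ := Real.sin_eq_zero_iff.mp hsin
  have hcos : Real.cos (θ₁ z) ≠ 0 := by
    intro h
    have h2 := Real.sin_sq_add_cos_sq (θ₁ z)
    rw [hsin, h] at h2; norm_num at h2
  have hpuz : pu₁ z ≠ 0 := by rw [hc₁ z hzI]; exact mul_ne_zero hρ.ne' hcos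
  have hev1 : ∀ᶠ t in nhds z, pu₁ t ≠ 0 := (hpu₁ z hzI).continuousAt.eventually_ne hpuz
  have hθcont : ContinuousAt θ₁ z := hθ₁.continuousAt (Ico_mem_nhds hz.1 hz.2)
  have hmemI : θ₁ z ∈ Ioo ((n:ℝ)*π - π/2) ((n:ℝ)*π + π/2) := by
    rw [← hn]; constructor <;> linarith
  have hev2 : ∀ᶠ t in nhds z, θ₁ t ∈ Ioo ((n:ℝ)*π - π/2) ((n:ℝ)*π + π/2) :=
    hθcont (Ioo_mem_nhds hmemI.1 hmemI.2)
  have hev3 : ∀ᶠ t in nhds z, t ∈ Ico a b :=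
    eventually_of_mem (Ico_mem_nhds hz.1 hz.2) (fun t ht => ht)
  have heq : θ₁ =ᶠ[nhds z] fun t => (n:ℝ)*π + Real.arctan (u₁ t / pu₁ t) := by
    filter_upwards [hev1, hev2, hev3] with t h1 h2 h3
    have hρt := hρ₁ t h3
    have hcost : Real.cos (θ₁ t) ≠ 0 := by
      intro h; exact h1 (by rw [hc₁ t h3, h, mul_zero])
    have htan : Real.tan (θ₁ t - (n:ℝ)*π) = u₁ t / pu₁ t := by
      have hper : Real.tan (θ₁ t - (n:ℝ)*π + (n:ℝ)*π) = Real.tan (θ₁ t - (n:ℝ)*π) :=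
        Real.tan_add_int_mul_pi _ n
      rw [sub_add_cancel] at hper
      rw [← hper, Real.tan_eq_sin_div_cos, hs₁ t h3, hc₁ t h3]
      rw [mul_div_mul_left _ _ hρt.ne']
    have harc := Real.arctan_tan (x := θ₁ t - (n:ℝ)*π) (by linarith [h2.1]) (by linarith [h2.2])
    rw [htan] at harc
    linarith [harc]
  have hw : HasDerivAt (fun t => u₁ t / pu₁ t)
      (((pu₁ z / p₁ z) * pu₁ z - u₁ z * ((q₁ z - lam₁ * r₁ z) * u₁ z)) / (pu₁ z)^2) z :=
    (hu₁ z hzI).div (hpu₁ z hzI) hpuz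
  have hwval : ((pu₁ z / p₁ z) * pu₁ z - u₁ z * ((q₁ z - lam₁ * r₁ z) * u₁ z)) / (pu₁ z)^2
      = 1 / p₁ z := by
    have hpz : p₁ z ≠ 0 := (hp₁ z hzI).ne'
    rw [hz0]
    field_simp
    ring
  rw [hwval] at hw
  have harc2 : HasDerivAt (fun t => (n:ℝ)*π + Real.arctan (u₁ t / pu₁ t)) (1 / p₁ z) z := by
    have h := (Real.hasDerivAt_arctan (u₁ z / pu₁ z)).comp z hw
    have h0 : u₁ z / pu₁ z = 0 := by rw [hz0, zero_div]
    rw [h0] at h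
    norm_num at h
    simpa [Function.comp, one_div] using h.const_add ((n:ℝ)*π)
  exact harc2.congr_of_eventuallyEq heq


/-- Lemma 2.6 ("MyLittlePony"). Suppose `τ₀ - λ₀` is nonoscillatory, i.e. the
nontrivial real solution `u₀` of `(τ₀ - λ₀)u = 0` has finitely many zeros in
`(a,b)`. Then `τ₁ - λ₁` is relatively nonoscillatory with respect to
`τ₀ - λ₀` — i.e. `liminf` and `limsup` as `x → b⁻` of
`N(u₀,u₁)(x) = ⌈(θ₁(x)-θ₀(x))/π⌉ - ⌊(θ₁(a)-θ₀(a))/π⌋ - 1` are both finite,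
expressed as eventual boundedness from above and below — if and only if
`τ₁ - λ₁` is nonoscillatory, i.e. `u₁` has finitely many zeros in `(a,b)`.
The solutions are given with quasi-derivatives `puⱼ = pⱼuⱼ'` and Prüfer
representations `uⱼ = ρⱼ sin θⱼ`, `puⱼ = ρⱼ cos θⱼ`, `ρⱼ > 0`. -/
theorem stmt_12 (a b lam₀ lam₁ : ℝ) (hab : a < b)
    (p₀ q₀ r₀ p₁ q₁ r₁ u₀ u₁ pu₀ pu₁ ρ₀ ρ₁ θ₀ θ₁ : ℝ → ℝ)
    (hp₀ : ∀ x ∈ Ico a b, 0 < p₀ x) (hp₁ : ∀ x ∈ Ico a b, 0 < p₁ x)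
    (hr₀ : ∀ x ∈ Ico a b, 0 < r₀ x) (hr₁ : ∀ x ∈ Ico a b, 0 < r₁ x)
    (hu₀ : ∀ x ∈ Ico a b, HasDerivAt u₀ (pu₀ x / p₀ x) x)
    (hpu₀ : ∀ x ∈ Ico a b, HasDerivAt pu₀ ((q₀ x - lam₀ * r₀ x) * u₀ x) x)
    (hu₁ : ∀ x ∈ Ico a b, HasDerivAt u₁ (pu₁ x / p₁ x) x)
    (hpu₁ : ∀ x ∈ Ico a b, HasDerivAt pu₁ ((q₁ x - lam₁ * r₁ x) * u₁ x) x)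
    (hρ₀ : ∀ x ∈ Ico a b, 0 < ρ₀ x) (hρ₁ : ∀ x ∈ Ico a b, 0 < ρ₁ x)
    (hs₀ : ∀ x ∈ Ico a b, u₀ x = ρ₀ x * Real.sin (θ₀ x))
    (hc₀ : ∀ x ∈ Ico a b, pu₀ x = ρ₀ x * Real.cos (θ₀ x))
    (hs₁ : ∀ x ∈ Ico a b, u₁ x = ρ₁ x * Real.sin (θ₁ x))
    (hc₁ : ∀ x ∈ Ico a b, pu₁ x = ρ₁ x * Real.cos (θ₁ x))
    (hθ₀ : ContinuousOn θ₀ (Ico a b)) (hθ₁ : ContinuousOn θ₁ (Ico a b))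
    (hnonosc₀ : {x ∈ Ioo a b | u₀ x = 0}.Finite) :
    ({x ∈ Ioo a b | u₁ x = 0}.Finite ↔
      (IsBoundedUnder (· ≤ ·) (nhdsWithin b (Iio b))
          (fun x => ⌈(θ₁ x - θ₀ x) / π⌉ - ⌊(θ₁ a - θ₀ a) / π⌋ - 1) ∧
       IsBoundedUnder (· ≥ ·) (nhdsWithin b (Iio b))
          (fun x => ⌈(θ₁ x - θ₀ x) / π⌉ - ⌊(θ₁ a - θ₀ a) / π⌋ - 1))) := by
  have hπ : (0:ℝ) < π := Real.pi_pos
  set D : ℤ := ⌊(θ₁ a - θ₀ a) / π⌋ with hD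
  obtain ⟨c₀, hac₀, hc₀b, hu₀ne⟩ := aux_tail hab hnonosc₀
  have hsin₀ : ∀ t ∈ Ioo c₀ b, Real.sin (θ₀ t) ≠ 0 := by
    intro t ht h
    have htI : t ∈ Ico a b := ⟨le_trans hac₀ ht.1.le, ht.2⟩
    exact hu₀ne t ht (by rw [hs₀ t htI, h, mul_zero])
  obtain ⟨k₀, hk₀⟩ := aux_interval θ₀ hc₀b
    (hθ₀.mono (fun t ht => ⟨le_trans hac₀ ht.1.le, ht.2⟩)) hsin₀
  constructor
  · -- forward: finitely many zeros of u₁ implies bounded relative oscillation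
    intro hfin
    obtain ⟨c₁, hac₁, hc₁b, hu₁ne⟩ := aux_tail hab hfin
    have hsin₁ : ∀ t ∈ Ioo c₁ b, Real.sin (θ₁ t) ≠ 0 := by
      intro t ht h
      have htI : t ∈ Ico a b := ⟨le_trans hac₁ ht.1.le, ht.2⟩
      exact hu₁ne t ht (by rw [hs₁ t htI, h, mul_zero])
    obtain ⟨k₁, hk₁⟩ := aux_interval θ₁ hc₁b
      (hθ₁.mono (fun t ht => ⟨le_trans hac₁ ht.1.le, ht.2⟩)) hsin₁
    have hcb : max c₀ c₁ < b := max_lt hc₀b hc₁b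
    have hmem : Ioo (max c₀ c₁) b ∈ nhdsWithin b (Iio b) :=
      Ioo_mem_nhdsLT hcb
    constructor
    · refine ⟨(k₁ + 1 - k₀ : ℤ) - D - 1, ?_⟩
      rw [Filter.eventually_map]
      filter_upwards [hmem] with t ht
      have h0 := hk₀ t ⟨lt_of_le_of_lt (le_max_left _ _) ht.1, ht.2⟩
      have h1 := hk₁ t ⟨lt_of_le_of_lt (le_max_right _ _) ht.1, ht.2⟩
      have hr : (θ₁ t - θ₀ t) / π ≤ ((k₁ + 1 - k₀ : ℤ) : ℝ) := by
        rw [div_le_iff₀ hπ]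
        push_cast
        nlinarith [h0.1, h1.2]
      have h2 : ⌈(θ₁ t - θ₀ t) / π⌉ ≤ k₁ + 1 - k₀ := Int.ceil_le.mpr hr
      simp only [ge_iff_le]
      omega
    · refine ⟨(k₁ - k₀ : ℤ) - D - 1, ?_⟩
      rw [Filter.eventually_map]
      filter_upwards [hmem] with t ht
      have h0 := hk₀ t ⟨lt_of_le_of_lt (le_max_left _ _) ht.1, ht.2⟩
      have h1 := hk₁ t ⟨lt_of_le_of_lt (le_max_right _ _) ht.1, ht.2⟩
      have hr : ((k₁ - k₀ - 1 : ℤ) : ℝ) < (θ₁ t - θ₀ t) / π := by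
        rw [lt_div_iff₀ hπ]
        push_cast
        nlinarith [h0.2, h1.1]
      have h2 : k₁ - k₀ - 1 < ⌈(θ₁ t - θ₀ t) / π⌉ := Int.lt_ceil.mpr hr
      simp only [ge_iff_le]
      omega
  · -- converse
    rintro ⟨⟨Cu, hCu⟩, Cl, hCl⟩
    rw [Filter.eventually_map] at hCu hCl
    by_contra hinf
    have hSinf : {x ∈ Ioo a b | u₁ x = 0}.Infinite := hinf
    have hev := hCu.and hCl
    rw [Filter.eventually_iff] at hev
    obtain ⟨c₂, hc₂, hsub₂⟩ := mem_nhdsLT_iff_exists_Ioo_subset.mp hev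
    set c := max (max c₀ c₂) a with hcdef
    have hcb : c < b := max_lt (max_lt hc₀b hc₂) hab
    have hac : a ≤ c := le_max_right _ _
    have hc₀c : c₀ ≤ c := le_trans (le_max_left _ _) (le_max_left _ _)
    have hc₂c : c₂ ≤ c := le_trans (le_max_right c₀ c₂) (le_max_left _ _)
    -- θ₁ is bounded on the tail
    obtain ⟨m, M, hmM⟩ : ∃ m M : ℝ, ∀ t ∈ Ioo c b, m < θ₁ t ∧ θ₁ t < M := by
      refine ⟨(k₀:ℝ) * π + ((Cl + D : ℤ) : ℝ) * π,
        ((k₀:ℝ) + 1) * π + ((Cu + D + 1 : ℤ) : ℝ) * π, fun t ht => ?_⟩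
      have ht₀ : t ∈ Ioo c₀ b := ⟨lt_of_le_of_lt hc₀c ht.1, ht.2⟩
      have ht₂ : t ∈ Ioo c₂ b := ⟨lt_of_le_of_lt hc₂c ht.1, ht.2⟩
      have h0 := hk₀ t ht₀
      obtain ⟨hCu', hCl'⟩ := hsub₂ ht₂
      simp only [ge_iff_le] at hCu' hCl'
      have h1 : ⌈(θ₁ t - θ₀ t) / π⌉ ≤ Cu + D + 1 := by omega
      have h2 : Cl + D + 1 ≤ ⌈(θ₁ t - θ₀ t) / π⌉ := by omega
      have hub : θ₁ t - θ₀ t ≤ ((Cu + D + 1 : ℤ) : ℝ) * π := by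
        have := le_trans (Int.le_ceil ((θ₁ t - θ₀ t) / π)) (by exact_mod_cast h1 :
          ((⌈(θ₁ t - θ₀ t) / π⌉ : ℤ) : ℝ) ≤ ((Cu + D + 1 : ℤ) : ℝ))
        rwa [div_le_iff₀ hπ] at this
      have hlb : ((Cl + D : ℤ) : ℝ) * π < θ₁ t - θ₀ t := by
        have hc1 : ((Cl + D + 1 : ℤ) : ℝ) ≤ (⌈(θ₁ t - θ₀ t) / π⌉ : ℝ) := by exact_mod_cast h2
        have hc2 : ((⌈(θ₁ t - θ₀ t) / π⌉ : ℤ) : ℝ) < (θ₁ t - θ₀ t) / π + 1 :=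
          Int.ceil_lt_add_one _
        have : ((Cl + D : ℤ) : ℝ) < (θ₁ t - θ₀ t) / π := by push_cast at hc1 ⊢; linarith
        rwa [lt_div_iff₀ hπ] at this
      exact ⟨by nlinarith [h0.1], by nlinarith [h0.2]⟩
    -- isolated zeros of u₁
    have hiso : ∀ x ∈ Ico a b, u₁ x = 0 → ∀ᶠ t in nhdsWithin x {x}ᶜ, u₁ t ≠ 0 := by
      intro x hx hx0
      have hρ := hρ₁ x hx
      have hsin : Real.sin (θ₁ x) = 0 :=
        (mul_eq_zero.mp ((hs₁ x hx).symm.trans hx0)).resolve_left hρ.ne'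
      have hcos : Real.cos (θ₁ x) ≠ 0 := by
        intro h
        have h2 := Real.sin_sq_add_cos_sq (θ₁ x)
        rw [hsin, h] at h2; norm_num at h2
      have hpux : pu₁ x ≠ 0 := by rw [hc₁ x hx]; exact mul_ne_zero hρ.ne' hcos
      have hd : pu₁ x / p₁ x ≠ 0 := div_ne_zero hpux (hp₁ x hx).ne'
      filter_upwards [aux_slope_ne (hu₁ x hx) hd] with t ht
      rwa [hx0] at ht
    -- zeros do not accumulate before b
    have hfinleft : ∀ c', a ≤ c' → c' < b →
        ({x ∈ Ioo a b | u₁ x = 0} ∩ Iic c').Finite := by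
      intro c' hac' hc'b
      by_contra hinfl
      have hinfl' : ({x ∈ Ioo a b | u₁ x = 0} ∩ Iic c').Infinite := hinfl
      have hsubK : {x ∈ Ioo a b | u₁ x = 0} ∩ Iic c' ⊆ Icc a c' :=
        fun t ht => ⟨ht.1.1.1.le, ht.2⟩
      obtain ⟨x, hxK, hacc⟩ := hinfl'.exists_accPt_of_subset_isCompact isCompact_Icc hsubK
      have hxI : x ∈ Ico a b := ⟨hxK.1, lt_of_le_of_lt hxK.2 hc'b⟩
      have hx0 : u₁ x = 0 := by
        have hxc : x ∈ closure ({x ∈ Ioo a b | u₁ x = 0} ∩ Iic c') :=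
          mem_closure_iff_clusterPt.mpr hacc.clusterPt
        obtain ⟨y, hy, hyx⟩ := mem_closure_iff_seq_limit.mp hxc
        have hten : Tendsto (fun n => u₁ (y n)) atTop (nhds (u₁ x)) :=
          (hu₁ x hxI).continuousAt.tendsto.comp hyx
        have h0 : (fun n => u₁ (y n)) = fun _ => (0:ℝ) := funext fun n => (hy n).1.2
        rw [h0] at hten
        exact tendsto_nhds_unique hten tendsto_const_nhds
      have hne := hiso x hxI hx0
      haveI : (nhdsWithin x {x}ᶜ ⊓
          Filter.principal ({x ∈ Ioo a b | u₁ x = 0} ∩ Iic c')).NeBot := hacc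
      have hne' : {t | u₁ t ≠ 0} ∈ nhdsWithin x {x}ᶜ := hne
      obtain ⟨t, ht⟩ := Filter.nonempty_of_mem (Filter.inter_mem_inf hne'
        (Filter.mem_principal_self ({x ∈ Ioo a b | u₁ x = 0} ∩ Iic c')))
      exact ht.1 ht.2.1.2
    -- infinitely many zeros beyond c
    have hZinf : ({x ∈ Ioo a b | u₁ x = 0} ∩ Ioi c).Infinite := by
      intro hZfin
      apply hSinf
      have hcov : {x ∈ Ioo a b | u₁ x = 0} ⊆
          ({x ∈ Ioo a b | u₁ x = 0} ∩ Iic c) ∪ ({x ∈ Ioo a b | u₁ x = 0} ∩ Ioi c) := by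
        intro t ht
        by_cases h : t ≤ c
        · exact Or.inl ⟨ht, h⟩
        · exact Or.inr ⟨ht, lt_of_not_ge h⟩
      exact Set.Finite.subset ((hfinleft c hac hcb).union hZfin) hcov
    -- pigeonhole on the angle value
    have hzk : ∀ t ∈ {x ∈ Ioo a b | u₁ x = 0} ∩ Ioi c, ∃ n : ℤ, (n:ℝ) * π = θ₁ t := by
      intro t ht
      have htI : t ∈ Ico a b := ⟨ht.1.1.1.le, ht.1.1.2⟩
      have hsin : Real.sin (θ₁ t) = 0 :=
        (mul_eq_zero.mp ((hs₁ t htI).symm.trans ht.1.2)).resolve_left (hρ₁ t htI).ne'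
      exact Real.sin_eq_zero_iff.mp hsin
    obtain ⟨k, hkmem, hFinf⟩ : ∃ k ∈ Finset.Icc ⌈m / π⌉ ⌊M / π⌋,
        {t ∈ {x ∈ Ioo a b | u₁ x = 0} ∩ Ioi c | θ₁ t = (k:ℝ) * π}.Infinite := by
      by_contra hall
      push_neg at hall
      apply hZinf
      have hcover : ({x ∈ Ioo a b | u₁ x = 0} ∩ Ioi c) ⊆
          ⋃ k ∈ Finset.Icc ⌈m / π⌉ ⌊M / π⌋,
            {t ∈ {x ∈ Ioo a b | u₁ x = 0} ∩ Ioi c | θ₁ t = (k:ℝ) * π} := by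
        intro t ht
        obtain ⟨n, hn⟩ := hzk t ht
        have htcb : t ∈ Ioo c b := ⟨ht.2, ht.1.1.2⟩
        obtain ⟨h1, h2⟩ := hmM t htcb
        have hn1 : ⌈m / π⌉ ≤ n := Int.ceil_le.mpr (by rw [div_le_iff₀ hπ, hn]; exact h1.le)
        have hn2 : n ≤ ⌊M / π⌋ := Int.le_floor.mpr (by rw [le_div_iff₀ hπ, hn]; exact h2.le)
        exact Set.mem_iUnion₂.mpr ⟨n, Finset.mem_Icc.mpr ⟨hn1, hn2⟩, ht, hn.symm⟩
      refine Set.Finite.subset (Set.Finite.biUnion ?_ (fun k hk => ?_)) hcover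
      · exact (Finset.Icc ⌈m / π⌉ ⌊M / π⌋).finite_toSet
      · exact hall k (Finset.mem_coe.mp hk)
    obtain ⟨x, hxF, y, hyF, hxy⟩ := hFinf.nontrivial
    have hzero_of_v : ∀ z ∈ Ioo a b, θ₁ z = (k:ℝ) * π → u₁ z = 0 := by
      intro z hz hθz
      rw [hs₁ z ⟨hz.1.le, hz.2⟩, hθz, Real.sin_int_mul_pi, mul_zero]
    have hlr : ∀ z ∈ Ioo a b, u₁ z = 0 →
        (∀ᶠ t in nhdsWithin z (Iio z), θ₁ t < θ₁ z) ∧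
        (∀ᶠ t in nhdsWithin z (Ioi z), θ₁ z < θ₁ t) := by
      intro z hz hz0
      exact aux_slope_pos (aux_lift hp₁ hu₁ hpu₁ hρ₁ hs₁ hc₁ hθ₁ hz hz0)
        (div_pos one_pos (hp₁ z ⟨hz.1.le, hz.2⟩))
    have key : ∀ x y : ℝ,
        x ∈ {t ∈ {x ∈ Ioo a b | u₁ x = 0} ∩ Ioi c | θ₁ t = (k:ℝ) * π} →
        y ∈ {t ∈ {x ∈ Ioo a b | u₁ x = 0} ∩ Ioi c | θ₁ t = (k:ℝ) * π} →
        x < y → False := by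
      clear hxF hyF hxy
      intro x y hx hy hxy
      have hxab : x ∈ Ioo a b := hx.1.1.1
      have hyab : y ∈ Ioo a b := hy.1.1.1
      have hx0 : u₁ x = 0 := hx.1.1.2
      have hy0 : u₁ y = 0 := hy.1.1.2
      have hθx : θ₁ x = (k:ℝ) * π := hx.2
      have hθy : θ₁ y = (k:ℝ) * π := hy.2
      set v : ℝ := (k:ℝ) * π with hv
      set T : Set ℝ := {t | t ∈ Ioo x y ∧ θ₁ t < v} with hT
      have hevy := (hlr y hyab hy0).1
      rw [hθy] at hevy
      rw [Filter.eventually_iff] at hevy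
      obtain ⟨l₁, hl₁, hsub₁⟩ := mem_nhdsLT_iff_exists_Ioo_subset.mp hevy
      have hmlt : max l₁ x < y := max_lt hl₁ hxy
      have ht₁mem : (max l₁ x + y) / 2 ∈ Ioo (max l₁ x) y := ⟨by linarith, by linarith⟩
      have ht₁T : (max l₁ x + y) / 2 ∈ T :=
        ⟨⟨lt_of_le_of_lt (le_max_right l₁ x) ht₁mem.1, ht₁mem.2⟩,
          hsub₁ ⟨lt_of_le_of_lt (le_max_left l₁ x) ht₁mem.1, ht₁mem.2⟩⟩
      have hevx := (hlr x hxab hx0).2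
      rw [hθx] at hevx
      rw [Filter.eventually_iff] at hevx
      obtain ⟨r, hr, hsub₂'⟩ := mem_nhdsGT_iff_exists_Ioo_subset.mp hevx
      have hTne : T.Nonempty := ⟨_, ht₁T⟩
      have hbdd : BddBelow T := ⟨x, fun t ht => ht.1.1.le⟩
      set z := sInf T with hzdef
      have hzle : ∀ t ∈ T, z ≤ t := fun t ht => csInf_le hbdd ht
      have hlbz : min r y ≤ z := by
        apply le_csInf hTne
        intro t ht
        by_contra hlt
        push_neg at hlt
        have htr : t ∈ Ioo x r := ⟨ht.1.1, lt_of_lt_of_le hlt (min_le_left r y)⟩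
        have h6 : θ₁ t < v := ht.2
        have h7 : v < θ₁ t := hsub₂' htr
        linarith
      have hzgt : x < z := lt_of_lt_of_le (lt_min hr hxy) hlbz
      have hzlt : z < y := lt_of_le_of_lt (hzle _ ht₁T) ht₁mem.2
      have hzab : z ∈ Ioo a b := ⟨lt_trans hxab.1 hzgt, lt_trans hzlt hyab.2⟩
      have hθzcont : ContinuousAt θ₁ z := hθ₁.continuousAt (Ico_mem_nhds hzab.1 hzab.2)
      have hnoleft : ¬ (∀ᶠ t in nhdsWithin z (Iio z), θ₁ t < v) := by
        intro hevl
        rw [Filter.eventually_iff] at hevl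
        obtain ⟨l₂, hl₂, hsub₃⟩ := mem_nhdsLT_iff_exists_Ioo_subset.mp hevl
        have hm2 : max l₂ x < z := max_lt hl₂ hzgt
        have ht₂mem : (max l₂ x + z) / 2 ∈ Ioo (max l₂ x) z := ⟨by linarith, by linarith⟩
        have ht₂T : (max l₂ x + z) / 2 ∈ T :=
          ⟨⟨lt_of_le_of_lt (le_max_right _ _) ht₂mem.1, lt_trans ht₂mem.2 hzlt⟩,
            hsub₃ ⟨lt_of_le_of_lt (le_max_left _ _) ht₂mem.1, ht₂mem.2⟩⟩
        exact absurd (hzle _ ht₂T) (not_le.mpr ht₂mem.2)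
      have hge : v ≤ θ₁ z := by
        by_contra hlt
        push_neg at hlt
        apply hnoleft
        have h5 : {t | θ₁ t < v} ∈ nhds z := hθzcont (Iio_mem_nhds hlt)
        exact Filter.eventually_iff.mpr (nhdsWithin_le_nhds h5)
      have hle : θ₁ z ≤ v := by
        by_contra hgt
        push_neg at hgt
        have h5 : {t | v < θ₁ t} ∈ nhds z := hθzcont (Ioi_mem_nhds hgt)
        obtain ⟨ε, hε, hball⟩ := Metric.mem_nhds_iff.mp h5
        have hzlt' : sInf T < z + ε := by rw [← hzdef]; linarith
        obtain ⟨t, htT, htlt⟩ := (csInf_lt_iff hbdd hTne).mp hzlt'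
        have hmem : t ∈ Metric.ball z ε := by
          rw [Metric.mem_ball, Real.dist_eq, abs_lt]
          constructor
          · linarith [hzle t htT]
          · linarith
        have h6 : θ₁ t < v := htT.2
        have h7 : v < θ₁ t := hball hmem
        linarith
      have hθz : θ₁ z = v := le_antisymm hle hge
      have hz0 : u₁ z = 0 := hzero_of_v z hzab hθz
      have hfin := (hlr z hzab hz0).1
      rw [hθz] at hfin
      exact hnoleft hfin
    rcases lt_or_gt_of_ne hxy with h | h
    · exact key x y hxF hyF h
    · exact key y x hyF hxF h
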